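/- For every positive integer n, the toric map f̄ and the reverse map g are graph automorphisms of Cay(Sym_n, T_n): both are bijections of Sym_n, and for all π, ρ ∈ Sym_n, π and ρ are adjacent in Cay(Sym_n, T_n) if and only if f̄(π) and f̄(ρ) are adjacent, and if and only if g(π) and g(ρ) are adjacent. -/

import Mathlib

/-- Auxiliary function: the action of the block transposition with cut points
`(i,j,k)` on `{1,…,n}`, written 1-based. -/
def btFun (i j k t : ℕ) : ℕ :=
  if t ≤ i ∨ k < t then t
  else if t ≤ k - j + i then t + j - i
  else t + j - k

theorem btFun_lb {i j k t : ℕ} (h1 : 1 ≤ t) : 1 ≤ btFun i j k t := by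
  unfold btFun; split_ifs <;> omega

theorem btFun_ub {i j k t n : ℕ} (ht : t ≤ n) (hjk : j ≤ k) (hkn : k ≤ n) :
    btFun i j k t ≤ n := by
  unfold btFun; split_ifs <;> omega

theorem btFun_inv {i j k : ℕ} (hij : i < j) (hjk : j < k) (t : ℕ) :
    btFun i (k - j + i) k (btFun i j k t) = t := by
  unfold btFun; split_ifs <;> omega

theorem btFun_inv' {i j k : ℕ} (hij : i < j) (hjk : j < k) (t : ℕ) :
    btFun i j k (btFun i (k - j + i) k t) = t := by
  have h := btFun_inv (i := i) (j := k - j + i) (k := k) (by omega) (by omega) t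
  have e : k - (k - j + i) + i = j := by omega
  rwa [e] at h

/-- The block transposition `σ(i,j,k)` as a permutation of `Fin n`,
where `t : Fin n` encodes the element `t.val + 1` of `{1,…,n}`. -/
def blockT (n i j k : ℕ) (hij : i < j) (hjk : j < k) (hkn : k ≤ n) :
    Equiv.Perm (Fin n) where
  toFun t := ⟨btFun i j k (t.1 + 1) - 1, by
    have h0 := t.isLt
    have h1 := btFun_lb (i := i) (j := j) (k := k) (t := t.1 + 1) (by omega)
    have h2 := btFun_ub (i := i) (j := j) (k := k) (t := t.1 + 1) (n := n)
      (by omega) (by omega) hkn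
    omega⟩
  invFun t := ⟨btFun i (k - j + i) k (t.1 + 1) - 1, by
    have h0 := t.isLt
    have h1 := btFun_lb (i := i) (j := k - j + i) (k := k) (t := t.1 + 1) (by omega)
    have h2 := btFun_ub (i := i) (j := k - j + i) (k := k) (t := t.1 + 1) (n := n)
      (by omega) (by omega) hkn
    omega⟩
  left_inv t := by
    have h1 := btFun_lb (i := i) (j := j) (k := k) (t := t.1 + 1) (by omega)
    have h2 := btFun_inv hij hjk (t.1 + 1)
    apply Fin.ext
    simp only
    have h3 : btFun i j k (t.1 + 1) - 1 + 1 = btFun i j k (t.1 + 1) := by omega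
    rw [h3, h2]
    omega
  right_inv t := by
    have h1 := btFun_lb (i := i) (j := k - j + i) (k := k) (t := t.1 + 1) (by omega)
    have h2 := btFun_inv' hij hjk (t.1 + 1)
    apply Fin.ext
    simp only
    have h3 : btFun i (k - j + i) k (t.1 + 1) - 1 + 1 = btFun i (k - j + i) k (t.1 + 1) := by
      omega
    rw [h3, h2]
    omega

/-- `T_n`: the set of all block transpositions on `{1,…,n}`. -/
def blockTranspositions (n : ℕ) : Set (Equiv.Perm (Fin n)) :=
  {π | ∃ (i j k : ℕ) (hij : i < j) (hjk : j < k) (hkn : k ≤ n),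
      blockT n i j k hij hjk hkn = π}

theorem blockT_inv {n i j k : ℕ} (hij : i < j) (hjk : j < k) (hkn : k ≤ n) :
    (blockT n i j k hij hjk hkn)⁻¹
      = blockT n i (k - j + i) k (by omega) (by omega) hkn :=
  Equiv.ext fun _ => rfl

theorem blockTranspositions_inv_mem {n : ℕ} {π : Equiv.Perm (Fin n)}
    (h : π ∈ blockTranspositions n) : π⁻¹ ∈ blockTranspositions n := by
  obtain ⟨i, j, k, hij, hjk, hkn, rfl⟩ := h
  exact ⟨i, k - j + i, k, by omega, by omega, hkn, (blockT_inv hij hjk hkn).symm⟩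

/-- The Cayley graph `Cay(Sym_n, T_n)`. -/
def cayleyT (n : ℕ) : SimpleGraph (Equiv.Perm (Fin n)) where
  Adj π ρ := π ≠ ρ ∧ π⁻¹ * ρ ∈ blockTranspositions n
  symm := ⟨by
    rintro π ρ ⟨hne, hmem⟩
    refine ⟨hne.symm, ?_⟩
    have h := blockTranspositions_inv_mem hmem
    rwa [mul_inv_rev, inv_inv] at h⟩
  loopless := ⟨fun π h => h.1 rfl⟩

def ext0 {n : ℕ} (π : Equiv.Perm (Fin n)) : Equiv.Perm (Fin (n + 1)) where
  toFun x := Fin.cases 0 (fun t => (π t).succ) x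
  invFun x := Fin.cases 0 (fun t => (π⁻¹ t).succ) x
  left_inv x := by
    cases x using Fin.cases with
    | zero => simp
    | succ t => simp
  right_inv x := by
    cases x using Fin.cases with
    | zero => simp
    | succ t => simp

theorem ext0_zero {n : ℕ} (π : Equiv.Perm (Fin n)) : ext0 π 0 = 0 := by
  simp [ext0]

open Fin.NatCast Fin.CommRing in
theorem finRotate_pow_apply {n : ℕ} (m : ℕ) (x : Fin (n + 1)) :
    ((finRotate (n + 1)) ^ m) x = x + (m : Fin (n + 1)) := by
  induction m with
  | zero => simp
  | succ m ih =>
      rw [pow_succ', Equiv.Perm.mul_apply, finRotate_succ_apply, ih]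
      push_cast
      ring

open Fin.NatCast Fin.CommRing in
/-- The auxiliary permutation `α^(n+1-r) ∘ [0 π] ∘ α^(π⁻¹(r))` of `{0,1,…,n}`. -/
def toricAux (n r : ℕ) (π : Equiv.Perm (Fin n)) : Equiv.Perm (Fin (n + 1)) :=
  (finRotate (n + 1)) ^ (n + 1 - r) * ext0 π *
    (finRotate (n + 1)) ^ (((ext0 π)⁻¹ (r : Fin (n + 1))) : ℕ)

open Fin.NatCast Fin.CommRing in
theorem toricAux_apply_zero (n r : ℕ) (hr : r ≤ n) (π : Equiv.Perm (Fin n)) :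
    toricAux n r π 0 = 0 := by
  unfold toricAux
  have h : r + (n + 1 - r) = n + 1 := by omega
  rw [Equiv.Perm.mul_apply, Equiv.Perm.mul_apply, finRotate_pow_apply,
    finRotate_pow_apply, zero_add, Fin.cast_val_eq_self,
    ← Equiv.Perm.mul_apply, mul_inv_cancel, Equiv.Perm.one_apply, ← Nat.cast_add, h, Fin.natCast_self]

/-- Restriction of a permutation of `{0,1,…,n}` fixing `0` to a permutation of `{1,…,n}`. -/
def unext0 {n : ℕ} (τ : Equiv.Perm (Fin (n + 1))) (h : τ 0 = 0) : Equiv.Perm (Fin n) where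
  toFun t := (τ t.succ).pred (by
    intro hc
    exact Fin.succ_ne_zero t (τ.injective (hc.trans h.symm)))
  invFun t := (τ⁻¹ t.succ).pred (by
    intro hc
    have h' : τ⁻¹ 0 = 0 := by
      conv_lhs => rw [← h]
      rw [← Equiv.Perm.mul_apply, inv_mul_cancel, Equiv.Perm.one_apply]
    exact Fin.succ_ne_zero t (τ⁻¹.injective (hc.trans h'.symm)))
  left_inv t := by
    apply Fin.succ_injective
    rw [Fin.succ_pred, Fin.succ_pred, ← Equiv.Perm.mul_apply, inv_mul_cancel, Equiv.Perm.one_apply]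
  right_inv t := by
    apply Fin.succ_injective
    rw [Fin.succ_pred, Fin.succ_pred, ← Equiv.Perm.mul_apply, mul_inv_cancel, Equiv.Perm.one_apply]

/-- The toric map `f̄_r` on `Sym_n`. -/
def toricMap (n r : ℕ) (hr : r ≤ n) (π : Equiv.Perm (Fin n)) : Equiv.Perm (Fin n) :=
  unext0 (toricAux n r π) (toricAux_apply_zero n r hr π)

/-- The reversal `w : t ↦ n+1-t` of `{1,…,n}`, in the `Fin n` encoding. -/
def wrev (n : ℕ) : Equiv.Perm (Fin n) where
  toFun t := ⟨n - 1 - t.val, by have := t.isLt; omega⟩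
  invFun t := ⟨n - 1 - t.val, by have := t.isLt; omega⟩
  left_inv t := by
    have := t.isLt
    apply Fin.ext
    simp only
    omega
  right_inv t := by
    have := t.isLt
    apply Fin.ext
    simp only
    omega

theorem wrev_wrev {n : ℕ} (t : Fin n) : wrev n (wrev n t) = t := by
  have := t.isLt
  apply Fin.ext
  simp only [wrev, Equiv.coe_fn_mk]
  omega

/-- The reverse map `g` on `Sym_n`: `g(π) = w ∘ π ∘ w`,
i.e. `(g π)(t) = n+1-π(n+1-t)` in 1-based notation. -/
def revMap {n : ℕ} (π : Equiv.Perm (Fin n)) : Equiv.Perm (Fin n) :=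
  wrev n * π * wrev n

theorem revMap_revMap {n : ℕ} (π : Equiv.Perm (Fin n)) : revMap (revMap π) = π := by
  ext t
  simp only [revMap, Equiv.Perm.mul_apply]
  rw [wrev_wrev, wrev_wrev]


open Fin.NatCast Fin.CommRing

theorem Equiv.Perm.inv_apply_self {α : Type*} (f : Equiv.Perm α) (x : α) : f⁻¹ (f x) = x :=
  Equiv.symm_apply_apply f x

theorem Equiv.Perm.apply_inv_self {α : Type*} (f : Equiv.Perm α) (x : α) : f (f⁻¹ x) = x :=
  Equiv.apply_symm_apply f x

/-! ### Auxiliary lemmas -/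

theorem mod_ite (a m : ℕ) (hm : 0 < m) (h : a < 2 * m) :
    a % m = if a < m then a else a - m := by
  split_ifs with h1
  · exact Nat.mod_eq_of_lt h1
  · rw [Nat.mod_eq_sub_mod (by omega), Nat.mod_eq_of_lt (by omega)]

theorem ext0_mul {n : ℕ} (π ρ : Equiv.Perm (Fin n)) :
    ext0 (π * ρ) = ext0 π * ext0 ρ := by
  apply Equiv.ext; intro x
  cases x using Fin.cases with
  | zero => simp [ext0, Equiv.Perm.mul_apply]
  | succ t => simp [ext0, Equiv.Perm.mul_apply]

theorem ext0_inv {n : ℕ} (π : Equiv.Perm (Fin n)) : (ext0 π)⁻¹ = ext0 π⁻¹ :=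
  Equiv.ext fun _ => rfl

theorem ext0_unext0 {n : ℕ} (τ : Equiv.Perm (Fin (n + 1))) (h : τ 0 = 0) :
    ext0 (unext0 τ h) = τ := by
  apply Equiv.ext; intro x
  cases x using Fin.cases with
  | zero => simpa [ext0] using h.symm
  | succ t => simp [ext0, unext0, Fin.succ_pred]

theorem unext0_ext0 {n : ℕ} (π : Equiv.Perm (Fin n)) (h : ext0 π 0 = 0) :
    unext0 (ext0 π) h = π := by
  apply Equiv.ext; intro t
  simp [unext0, ext0]

theorem ext0_injective {n : ℕ} : Function.Injective (ext0 (n := n)) := by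
  intro π ρ h
  apply Equiv.ext; intro t
  have h2 := congrArg (fun τ : Equiv.Perm (Fin (n + 1)) => τ t.succ) h
  simp only [ext0, Equiv.coe_fn_mk, Fin.cases_succ] at h2
  exact Fin.succ_injective _ h2

theorem unext0_inv_mul {n : ℕ} (A B : Equiv.Perm (Fin (n + 1)))
    (hA : A 0 = 0) (hB : B 0 = 0) :
    (unext0 A hA)⁻¹ * unext0 B hB
      = unext0 (A⁻¹ * B) (by
          rw [Equiv.Perm.mul_apply, hB]
          exact Equiv.Perm.inv_eq_iff_eq.mpr hA.symm) := by
  apply Equiv.ext; intro t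
  simp [unext0, Equiv.Perm.mul_apply, Fin.succ_pred, Equiv.Perm.inv_def,
    Equiv.coe_fn_symm_mk]

theorem ext0_blockT_val {n i j k : ℕ} (hij : i < j) (hjk : j < k) (hkn : k ≤ n)
    (y : Fin (n + 1)) :
    ((ext0 (blockT n i j k hij hjk hkn)) y : ℕ) = btFun i j k y.val := by
  cases y using Fin.cases with
  | zero =>
    have h0 : btFun i j k 0 = 0 := by
      unfold btFun; rw [if_pos (Or.inl (Nat.zero_le i))]
    simp [ext0, h0]
  | succ t =>
    have h1 := btFun_lb (i := i) (j := j) (k := k) (t := t.1 + 1) (by omega)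
    simp only [ext0, Equiv.coe_fn_mk, Fin.cases_succ, Fin.val_succ, blockT]
    omega

theorem ext0_blockT_inv_val {n i j k : ℕ} (hij : i < j) (hjk : j < k) (hkn : k ≤ n)
    (y : Fin (n + 1)) :
    (((ext0 (blockT n i j k hij hjk hkn))⁻¹) y : ℕ) = btFun i (k - j + i) k y.val := by
  rw [ext0_inv, blockT_inv]
  exact ext0_blockT_val _ _ _ y

theorem toricAux_blockT_val {n r i j k : ℕ} (hr : r ≤ n)
    (hij : i < j) (hjk : j < k) (hkn : k ≤ n) (x : Fin (n + 1)) :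
    ((toricAux n r (blockT n i j k hij hjk hkn)) x : ℕ)
      = (btFun i j k ((x.val + btFun i (k - j + i) k r) % (n + 1)) + (n + 1 - r))
          % (n + 1) := by
  unfold toricAux
  rw [Equiv.Perm.mul_apply, Equiv.Perm.mul_apply, finRotate_pow_apply,
    finRotate_pow_apply, Fin.cast_val_eq_self]
  rw [Fin.val_add, Fin.val_natCast, Nat.add_mod_mod]
  rw [ext0_blockT_val hij hjk hkn]
  congr 2
  have hc := ext0_blockT_inv_val hij hjk hkn ((r : Fin (n + 1)))
  rw [Fin.val_natCast, Nat.mod_eq_of_lt (by omega)] at hc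
  rw [Fin.val_add, hc]

set_option maxHeartbeats 1000000 in
/-- One case of the arithmetic core computation. -/
theorem toric_bt_case {n r i j k x s i' j' k' : ℕ}
    (hr : r ≤ n) (hx : x ≤ n) (hij : i < j) (hjk : j < k) (hkn : k ≤ n)
    (hs : s ≤ n)
    (h : (r ≤ i ∧ s = r ∧ i' = i - r ∧ j' = j - r ∧ k' = k - r)
       ∨ (i < r ∧ r ≤ j ∧ s = r + k - j ∧ i' = j - r ∧ j' = k - r ∧ k' = n + 1 - r + i)
       ∨ (j < r ∧ r ≤ k ∧ s = r + i - j ∧ i' = k - r ∧ j' = n + 1 - r + i ∧ k' = n + 1 - r + j)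
       ∨ (k < r ∧ s = r ∧ i' = i + n + 1 - r ∧ j' = j + n + 1 - r ∧ k' = k + n + 1 - r)) :
    (btFun i j k ((x + s) % (n + 1)) + (n + 1 - r)) % (n + 1) = btFun i' j' k' x := by
  rw [mod_ite (x + s) (n + 1) (by omega) (by omega)]
  have hy : (if x + s < n + 1 then x + s else x + s - (n + 1)) ≤ n := by
    split <;> omega
  have hb := btFun_ub (i := i)
    (t := if x + s < n + 1 then x + s else x + s - (n + 1)) hy (le_of_lt hjk) hkn
  rw [mod_ite _ (n + 1) (by omega) (by omega)]
  clear hb hy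
  rcases h with ⟨h1, rfl, rfl, rfl, rfl⟩ | ⟨h1, h2, rfl, rfl, rfl, rfl⟩ |
    ⟨h1, h2, rfl, rfl, rfl, rfl⟩ | ⟨h1, rfl, rfl, rfl, rfl⟩ <;>
    · unfold btFun
      split_ifs <;> omega

/-- The arithmetic core: the toric image of a block transposition pattern. -/
theorem toric_bt_core {n r i j k x i' j' k' : ℕ}
    (hr : r ≤ n) (hx : x ≤ n) (hij : i < j) (hjk : j < k) (hkn : k ≤ n)
    (h : (r ≤ i ∧ i' = i - r ∧ j' = j - r ∧ k' = k - r)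
       ∨ (i < r ∧ r ≤ j ∧ i' = j - r ∧ j' = k - r ∧ k' = n + 1 - r + i)
       ∨ (j < r ∧ r ≤ k ∧ i' = k - r ∧ j' = n + 1 - r + i ∧ k' = n + 1 - r + j)
       ∨ (k < r ∧ i' = i + n + 1 - r ∧ j' = j + n + 1 - r ∧ k' = k + n + 1 - r)) :
    (btFun i j k ((x + btFun i (k - j + i) k r) % (n + 1)) + (n + 1 - r)) % (n + 1)
      = btFun i' j' k' x := by
  rcases h with ⟨h1, rfl, rfl, rfl⟩ | ⟨h1, h2, rfl, rfl, rfl⟩ |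
    ⟨h1, h2, rfl, rfl, rfl⟩ | ⟨h1, rfl, rfl, rfl⟩
  · have hs2 : btFun i (k - j + i) k r = r := by unfold btFun; split_ifs <;> omega
    rw [hs2]
    exact toric_bt_case hr hx hij hjk hkn (by omega)
      (Or.inl ⟨h1, rfl, rfl, rfl, rfl⟩)
  · have hs2 : btFun i (k - j + i) k r = r + k - j := by
      unfold btFun; split_ifs <;> omega
    rw [hs2]
    exact toric_bt_case hr hx hij hjk hkn (by omega)
      (Or.inr (Or.inl ⟨h1, h2, rfl, rfl, rfl, rfl⟩))
  · have hs2 : btFun i (k - j + i) k r = r + i - j := by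
      unfold btFun; split_ifs <;> omega
    rw [hs2]
    exact toric_bt_case hr hx hij hjk hkn (by omega)
      (Or.inr (Or.inr (Or.inl ⟨h1, h2, rfl, rfl, rfl, rfl⟩)))
  · have hs2 : btFun i (k - j + i) k r = r := by unfold btFun; split_ifs <;> omega
    rw [hs2]
    exact toric_bt_case hr hx hij hjk hkn (by omega)
      (Or.inr (Or.inr (Or.inr ⟨h1, rfl, rfl, rfl, rfl⟩)))

theorem toricMap_blockT {n r i j k : ℕ} (hr : r ≤ n)
    (hij : i < j) (hjk : j < k) (hkn : k ≤ n) :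
    toricMap n r hr (blockT n i j k hij hjk hkn) ∈ blockTranspositions n := by
  have key : ∀ i' j' k' (hij' : i' < j') (hjk' : j' < k') (hkn' : k' ≤ n),
      ((r ≤ i ∧ i' = i - r ∧ j' = j - r ∧ k' = k - r)
       ∨ (i < r ∧ r ≤ j ∧ i' = j - r ∧ j' = k - r ∧ k' = n + 1 - r + i)
       ∨ (j < r ∧ r ≤ k ∧ i' = k - r ∧ j' = n + 1 - r + i ∧ k' = n + 1 - r + j)
       ∨ (k < r ∧ i' = i + n + 1 - r ∧ j' = j + n + 1 - r ∧ k' = k + n + 1 - r)) →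
      toricMap n r hr (blockT n i j k hij hjk hkn) ∈ blockTranspositions n := by
    intro i' j' k' hij' hjk' hkn' hcase
    refine ⟨i', j', k', hij', hjk', hkn', ?_⟩
    have heq : toricAux n r (blockT n i j k hij hjk hkn)
        = ext0 (blockT n i' j' k' hij' hjk' hkn') := by
      apply Equiv.ext; intro x
      apply Fin.ext
      rw [toricAux_blockT_val hr hij hjk hkn, ext0_blockT_val hij' hjk' hkn']
      exact toric_bt_core hr (by omega) hij hjk hkn hcase
    apply ext0_injective
    rw [toricMap, ext0_unext0]
    exact heq.symm
  rcases le_or_gt r i with hc | hc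
  · exact key (i - r) (j - r) (k - r) (by omega) (by omega) (by omega)
      (Or.inl ⟨hc, rfl, rfl, rfl⟩)
  rcases le_or_gt r j with hc2 | hc2
  · exact key (j - r) (k - r) (n + 1 - r + i) (by omega) (by omega) (by omega)
      (Or.inr (Or.inl ⟨hc, hc2, rfl, rfl, rfl⟩))
  rcases le_or_gt r k with hc3 | hc3
  · exact key (k - r) (n + 1 - r + i) (n + 1 - r + j) (by omega) (by omega) (by omega)
      (Or.inr (Or.inr (Or.inl ⟨hc2, hc3, rfl, rfl, rfl⟩)))
  · exact key (i + n + 1 - r) (j + n + 1 - r) (k + n + 1 - r) (by omega) (by omega)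
      (by omega) (Or.inr (Or.inr (Or.inr ⟨hc3, rfl, rfl, rfl⟩)))


theorem finRotate_pow_top {n : ℕ} : (finRotate (n + 1)) ^ (n + 1) = 1 := by
  apply Equiv.ext; intro x
  rw [finRotate_pow_apply]
  simp [Fin.natCast_self]

theorem finRotate_pow_inv {n m : ℕ} (hm : m ≤ n + 1) :
    ((finRotate (n + 1)) ^ m)⁻¹ = (finRotate (n + 1)) ^ (n + 1 - m) := by
  symm
  apply eq_inv_of_mul_eq_one_left
  rw [← pow_add, show n + 1 - m + m = n + 1 by omega, finRotate_pow_top]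

theorem unext0_congr {n : ℕ} {X Y : Equiv.Perm (Fin (n + 1))}
    (hX : X 0 = 0) (hY : Y 0 = 0) (h : X = Y) : unext0 X hX = unext0 Y hY := by
  subst h; rfl

theorem toricMap_injective (n r : ℕ) (hr : r ≤ n) :
    Function.Injective (toricMap n r hr) := by
  intro π ρ h
  have h2 : toricAux n r π = toricAux n r ρ := by
    have h' := congrArg ext0 h
    rwa [toricMap, toricMap, ext0_unext0, ext0_unext0] at h'
  unfold toricAux at h2
  rw [mul_assoc, mul_assoc] at h2
  have h4 := mul_left_cancel h2
  set a := (ext0 π)⁻¹ ((r : Fin (n + 1))) with ha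
  set b := (ext0 ρ)⁻¹ ((r : Fin (n + 1))) with hb
  have h5 := congrArg
    (fun σ : Equiv.Perm (Fin (n + 1)) =>
      σ (((finRotate (n + 1)) ^ (a.val))⁻¹ 0)) h4
  simp only [Equiv.Perm.mul_apply, Equiv.Perm.apply_inv_self] at h5
  rw [ext0_zero] at h5
  have h6 : ((finRotate (n + 1)) ^ (b.val)) (((finRotate (n + 1)) ^ (a.val))⁻¹ 0) = 0 := by
    have h7 := congrArg (fun z => (ext0 ρ)⁻¹ z) h5
    simp only [Equiv.Perm.inv_apply_self] at h7
    rw [← h7]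
    exact Equiv.Perm.inv_eq_iff_eq.mpr (ext0_zero ρ).symm
  have h7 : ((finRotate (n + 1)) ^ (a.val)) (((finRotate (n + 1)) ^ (a.val))⁻¹ 0) = 0 :=
    Equiv.Perm.apply_inv_self _ _
  have h8 := h6.trans h7.symm
  rw [finRotate_pow_apply, finRotate_pow_apply] at h8
  have h9 : a = b := by
    have h10 := add_left_cancel h8
    rw [Fin.cast_val_eq_self, Fin.cast_val_eq_self] at h10
    exact h10.symm
  rw [← h9] at h4
  have h11 := mul_right_cancel h4
  exact ext0_injective h11

theorem toricMap_mem_iff (n r : ℕ) (hr : r ≤ n) (σ : Equiv.Perm (Fin n)) :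
    σ ∈ blockTranspositions n ↔ toricMap n r hr σ ∈ blockTranspositions n := by
  constructor
  · rintro ⟨i, j, k, hij, hjk, hkn, rfl⟩
    exact toricMap_blockT hr hij hjk hkn
  · intro hmem
    have hinj := toricMap_injective n r hr
    have hsub : toricMap n r hr '' blockTranspositions n ⊆ blockTranspositions n := by
      rintro _ ⟨τ, ⟨i, j, k, hij, hjk, hkn, rfl⟩, rfl⟩
      exact toricMap_blockT hr hij hjk hkn
    have heq : toricMap n r hr '' blockTranspositions n = blockTranspositions n :=
      Set.eq_of_subset_of_ncard_le hsub
        (by rw [Set.ncard_image_of_injective _ hinj]) (Set.toFinite _)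
    rw [← heq] at hmem
    obtain ⟨τ, hτ, hτ2⟩ := hmem
    rwa [← hinj hτ2]

theorem toricMap_inv_mul (n : ℕ) (hn : 1 ≤ n) (π ρ : Equiv.Perm (Fin n)) :
    ∃ (a : ℕ) (ha : a ≤ n),
      (toricMap n 1 hn π)⁻¹ * toricMap n 1 hn ρ = toricMap n a ha (π⁻¹ * ρ) := by
  refine ⟨((ext0 π)⁻¹ (((1 : ℕ) : Fin (n + 1)))).val,
    by have := ((ext0 π)⁻¹ (((1 : ℕ) : Fin (n + 1)))).isLt; omega, ?_⟩
  rw [toricMap, toricMap, toricMap, unext0_inv_mul]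
  apply unext0_congr
  unfold toricAux
  have hq : (ext0 (π⁻¹ * ρ))⁻¹
        (((((ext0 π)⁻¹ (((1 : ℕ) : Fin (n + 1)))).val : ℕ) : Fin (n + 1)))
      = (ext0 ρ)⁻¹ (((1 : ℕ) : Fin (n + 1))) := by
    rw [Fin.cast_val_eq_self, ext0_mul, mul_inv_rev, Equiv.Perm.mul_apply,
      ext0_inv π, Equiv.Perm.inv_apply_self]
  rw [hq, ext0_mul]
  rw [mul_inv_rev, mul_inv_rev]
  simp only [mul_assoc]
  rw [inv_mul_cancel_left]
  rw [finRotate_pow_inv (by omega), ext0_inv]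

theorem cayleyT_adj {n : ℕ} (π ρ : Equiv.Perm (Fin n)) :
    (cayleyT n).Adj π ρ ↔ π ≠ ρ ∧ π⁻¹ * ρ ∈ blockTranspositions n := Iff.rfl

theorem wrev_mul_self (n : ℕ) : wrev n * wrev n = 1 := by
  apply Equiv.ext; intro t
  rw [Equiv.Perm.mul_apply, wrev_wrev]
  rfl

theorem wrev_inv (n : ℕ) : (wrev n)⁻¹ = wrev n :=
  inv_eq_of_mul_eq_one_right (wrev_mul_self n)

theorem revMap_inv_mul {n : ℕ} (π ρ : Equiv.Perm (Fin n)) :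
    (revMap π)⁻¹ * revMap ρ = revMap (π⁻¹ * ρ) := by
  unfold revMap
  rw [mul_inv_rev, mul_inv_rev, wrev_inv]
  simp only [mul_assoc]
  rw [← mul_assoc (wrev n) (wrev n) (ρ * wrev n), wrev_mul_self, one_mul]

theorem revMap_blockT {n i j k : ℕ} (hij : i < j) (hjk : j < k) (hkn : k ≤ n) :
    revMap (blockT n i j k hij hjk hkn)
      = blockT n (n - k) (n - j) (n - i) (by omega) (by omega) (by omega) := by
  apply Equiv.ext; intro t; apply Fin.ext
  have ht := t.isLt
  simp only [revMap, Equiv.Perm.mul_apply, wrev, blockT, Equiv.coe_fn_mk]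
  unfold btFun
  split_ifs <;> omega

theorem revMap_mem {n : ℕ} {σ : Equiv.Perm (Fin n)}
    (h : σ ∈ blockTranspositions n) : revMap σ ∈ blockTranspositions n := by
  obtain ⟨i, j, k, hij, hjk, hkn, rfl⟩ := h
  exact ⟨n - k, n - j, n - i, by omega, by omega, by omega,
    (revMap_blockT hij hjk hkn).symm⟩

theorem revMap_mem_iff {n : ℕ} (σ : Equiv.Perm (Fin n)) :
    σ ∈ blockTranspositions n ↔ revMap σ ∈ blockTranspositions n := by
  refine ⟨revMap_mem, fun h => ?_⟩
  have := revMap_mem h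
  rwa [revMap_revMap] at this

/-- The toric map `f̄` and the reverse map `g` are graph
automorphisms of `Cay(Sym_n, T_n)`. -/
theorem stmt_8 (n : ℕ) (hn : 1 ≤ n) :
    Function.Bijective (toricMap n 1 hn) ∧
    Function.Bijective (revMap (n := n)) ∧
    (∀ π ρ : Equiv.Perm (Fin n),
      ((cayleyT n).Adj π ρ ↔ (cayleyT n).Adj (toricMap n 1 hn π) (toricMap n 1 hn ρ)) ∧
      ((cayleyT n).Adj π ρ ↔ (cayleyT n).Adj (revMap π) (revMap ρ))) := by
  have hinj := toricMap_injective n 1 hn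
  have hrevinv : Function.Involutive (revMap (n := n)) := revMap_revMap
  refine ⟨Finite.injective_iff_bijective.mp hinj, hrevinv.bijective, fun π ρ => ⟨?_, ?_⟩⟩
  · obtain ⟨a, ha, hprod⟩ := toricMap_inv_mul n hn π ρ
    rw [cayleyT_adj, cayleyT_adj, hprod]
    exact and_congr hinj.ne_iff.symm (toricMap_mem_iff n a ha _)
  · rw [cayleyT_adj, cayleyT_adj, revMap_inv_mul]
    exact and_congr hrevinv.injective.ne_iff.symm (revMap_mem_iff _)
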